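/- arXiv:1406.7406 — 3 statements merged into one kernel-verified Lean document; each statement's English description precedes it below -/
import Mathlib

section
/- Let n ≥ 1 be an integer and T, D, M, c₁, c₂, c₃, c₄ > 0. Suppose K : (0,∞) × (0,D] → [0,∞) is measurable and satisfies: (i) c₁ t^{-n/2} e^{-r²/(c₂ t)} ≤ K(t,r) ≤ c₃ t^{-n/2} e^{-r²/(c₄ t)} for all 0 < t < T and 0 < r ≤ D; (ii) 0 ≤ K(t,r) ≤ M for all t ≥ T and 0 < r ≤ D. Define P(y,r) = (y/(2√π)) ∫₀^∞ e^{-y²/(4t)} K(t,r) t^{-3/2} dt. Then there exist constants 0 < c ≤ C, depending only on n, T, D, M, c₁, c₂, c₃, c₄, such that for all 0 < y < 1 and all 0 < r ≤ D: c · y/(y² + r²)^{(n+1)/2} ≤ P(y,r) ≤ C · y/(y² + r²)^{(n+1)/2}. -/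
open MeasureTheory Real Set

lemma aux_inv_gamma {b p : ℝ} (hb : 0 < b) (hp : 0 < p) :
    IntegrableOn (fun t : ℝ => Real.exp (-(b / t)) * t ^ (-p - 1)) (Ioi 0) ∧
    ∫ t in Ioi (0 : ℝ), Real.exp (-(b / t)) * t ^ (-p - 1)
      = (1 / b) ^ p * Real.Gamma p := by
  set g : ℝ → ℝ := fun u => u ^ (p - 1) * Real.exp (-(b * u)) with hg
  have hgint : IntegrableOn g (Ioi 0) := by
    have h := integrableOn_rpow_mul_exp_neg_mul_rpow (p := 1) (s := p - 1) (b := b)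
      (by linarith) zero_lt_one hb
    exact h.congr_fun (fun x _ => by beta_reduce; rw [Real.rpow_one, hg, neg_mul]) measurableSet_Ioi
  have key : Set.EqOn (fun x : ℝ => (|(-1 : ℝ)| * x ^ ((-1 : ℝ) - 1)) • g (x ^ (-1 : ℝ)))
      (fun x : ℝ => Real.exp (-(b / x)) * x ^ (-p - 1)) (Ioi 0) := by
    intro x hx
    have hx0 : (0 : ℝ) < x := hx
    simp only [hg, abs_neg, abs_one, one_mul, smul_eq_mul]
    rw [← Real.rpow_mul hx0.le, Real.rpow_neg_one, ← div_eq_mul_inv, ← mul_assoc,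
      ← Real.rpow_add hx0, show (-1 : ℝ) - 1 + -1 * (p - 1) = -p - 1 by ring, mul_comm]
  constructor
  · exact (integrableOn_congr_fun key measurableSet_Ioi).mp
      ((integrableOn_Ioi_comp_rpow_iff g (p := -1) (by norm_num)).2 hgint)
  · have h2 := integral_comp_rpow_Ioi g (p := -1) (by norm_num)
    rw [setIntegral_congr_fun measurableSet_Ioi key] at h2
    rw [h2, hg]
    exact integral_rpow_mul_exp_neg_mul_Ioi hp hb

set_option maxHeartbeats 2000000 in
lemma key_upper (n : ℕ) {T D M c₃ c₄ : ℝ}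
    (hT : 0 < T) (hD : 0 < D) (hM : 0 < M) (hc₃ : 0 < c₃) (hc₄ : 0 < c₄) :
    ∃ C : ℝ, 0 < C ∧
      ∀ K : ℝ → ℝ → ℝ, Measurable (Function.uncurry K) →
        (∀ t r, 0 < t → t < T → 0 < r → r ≤ D →
          K t r ≤ c₃ * t ^ (-(n : ℝ) / 2) * Real.exp (-(r ^ 2 / (c₄ * t)))) →
        (∀ t r, T ≤ t → 0 < r → r ≤ D → 0 ≤ K t r ∧ K t r ≤ M) →
        (∀ t r, 0 < t → 0 < r → r ≤ D → 0 ≤ K t r) →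
        ∀ y r : ℝ, 0 < y → y < 1 → 0 < r → r ≤ D →
          IntegrableOn
            (fun t => Real.exp (-(y ^ 2 / (4 * t))) * K t r * t ^ (-(3 : ℝ) / 2)) (Ioi 0) ∧
          ∫ t in Ioi (0 : ℝ), Real.exp (-(y ^ 2 / (4 * t))) * K t r * t ^ (-(3 : ℝ) / 2)
            ≤ C * (y ^ 2 + r ^ 2) ^ (-(((n : ℝ) + 1) / 2)) := by
  have hP : (0 : ℝ) < ((n : ℝ) + 1) / 2 := by positivity
  have ha : (0 : ℝ) < min (4 : ℝ)⁻¹ c₄⁻¹ := lt_min (by norm_num) (by positivity)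
  refine ⟨c₃ * Real.Gamma (((n : ℝ) + 1) / 2) * (min (4 : ℝ)⁻¹ c₄⁻¹) ^ (-(((n : ℝ) + 1) / 2))
      + 2 * M * T ^ (-(1 : ℝ) / 2) * (1 + D ^ 2) ^ (((n : ℝ) + 1) / 2), by positivity, ?_⟩
  intro K hK hupp hbig hnn y r hy hy1 hr hrD
  have hs : (0 : ℝ) < y ^ 2 + r ^ 2 := by positivity
  have hsle : y ^ 2 + r ^ 2 ≤ 1 + D ^ 2 := by nlinarith
  have hab : (0 : ℝ) < min (4 : ℝ)⁻¹ c₄⁻¹ * (y ^ 2 + r ^ 2) := by positivity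
  obtain ⟨hgi1, hgv1⟩ := aux_inv_gamma hab hP
  set g : ℝ → ℝ := fun t =>
    c₃ * (Real.exp (-(min (4 : ℝ)⁻¹ c₄⁻¹ * (y ^ 2 + r ^ 2) / t)) * t ^ (-(((n : ℝ) + 1) / 2) - 1))
      + Set.indicator (Ici T) (fun t => M * t ^ (-(3 : ℝ) / 2)) t with hgdef
  have hind : IntegrableOn (fun t => Set.indicator (Ici T) (fun t : ℝ => M * t ^ (-(3 : ℝ) / 2)) t)
      (Ioi 0) := by
    have h1 : IntegrableOn (fun t : ℝ => M * t ^ (-(3 : ℝ) / 2)) (Ici T) := by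
      rw [integrableOn_Ici_iff_integrableOn_Ioi]
      exact (integrableOn_Ioi_rpow_of_lt (by norm_num) hT).const_mul M
    exact ((integrable_indicator_iff measurableSet_Ici).2 h1).integrableOn
  have hgint : IntegrableOn g (Ioi 0) := (hgi1.const_mul c₃).add hind
  have hfnn : ∀ t ∈ Ioi (0 : ℝ),
      0 ≤ Real.exp (-(y ^ 2 / (4 * t))) * K t r * t ^ (-(3 : ℝ) / 2) := by
    intro t ht
    have ht0 : (0 : ℝ) < t := ht
    have := hnn t r ht0 hr hrD
    positivity
  have hdom : ∀ t ∈ Ioi (0 : ℝ),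
      Real.exp (-(y ^ 2 / (4 * t))) * K t r * t ^ (-(3 : ℝ) / 2) ≤ g t := by
    intro t ht
    have ht0 : (0 : ℝ) < t := ht
    rcases lt_or_ge t T with htT | htT
    · have h1 : Real.exp (-(y ^ 2 / (4 * t))) * K t r * t ^ (-(3 : ℝ) / 2)
          ≤ Real.exp (-(y ^ 2 / (4 * t)))
            * (c₃ * t ^ (-(n : ℝ) / 2) * Real.exp (-(r ^ 2 / (c₄ * t)))) * t ^ (-(3 : ℝ) / 2) := by
        have hb := hupp t r ht0 htT hr hrD
        have e1 : (0:ℝ) < Real.exp (-(y ^ 2 / (4 * t))) := Real.exp_pos _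
        have e2 : (0:ℝ) < t ^ (-(3 : ℝ) / 2) := Real.rpow_pos_of_pos ht0 _
        exact mul_le_mul_of_nonneg_right (mul_le_mul_of_nonneg_left hb e1.le) e2.le
      refine h1.trans ?_
      have h2 : Real.exp (-(y ^ 2 / (4 * t))) * (c₃ * t ^ (-(n : ℝ) / 2)
            * Real.exp (-(r ^ 2 / (c₄ * t)))) * t ^ (-(3 : ℝ) / 2)
          = c₃ * ((Real.exp (-(y ^ 2 / (4 * t))) * Real.exp (-(r ^ 2 / (c₄ * t))))
            * (t ^ (-(n : ℝ) / 2) * t ^ (-(3 : ℝ) / 2))) := by ring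
      have h3 : min (4 : ℝ)⁻¹ c₄⁻¹ * (y ^ 2 + r ^ 2) / t
          ≤ y ^ 2 / (4 * t) + r ^ 2 / (c₄ * t) := by
        have h4 : min (4 : ℝ)⁻¹ c₄⁻¹ * (y ^ 2 + r ^ 2) ≤ y ^ 2 / 4 + r ^ 2 / c₄ := by
          have e1 := min_le_left (4:ℝ)⁻¹ c₄⁻¹
          have e2 := min_le_right (4:ℝ)⁻¹ c₄⁻¹
          have e3 : y ^ 2 / 4 = (4:ℝ)⁻¹ * y ^ 2 := by ring
          have e4 : r ^ 2 / c₄ = c₄⁻¹ * r ^ 2 := by rw [div_eq_inv_mul]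
          rw [e3, e4]
          nlinarith [mul_le_mul_of_nonneg_right e1 (sq_nonneg y),
            mul_le_mul_of_nonneg_right e2 (sq_nonneg r)]
        calc min (4 : ℝ)⁻¹ c₄⁻¹ * (y ^ 2 + r ^ 2) / t ≤ (y ^ 2 / 4 + r ^ 2 / c₄) / t :=
              div_le_div_of_nonneg_right h4 ht0.le
          _ = y ^ 2 / (4 * t) + r ^ 2 / (c₄ * t) := by rw [add_div, div_div, div_div]
      rw [h2, ← Real.exp_add, ← Real.rpow_add ht0,
        show -(n:ℝ)/2 + -(3:ℝ)/2 = -(((n:ℝ)+1)/2) - 1 by ring]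
      have h5 : Real.exp (-(y ^ 2 / (4 * t)) + -(r ^ 2 / (c₄ * t)))
          ≤ Real.exp (-(min (4 : ℝ)⁻¹ c₄⁻¹ * (y ^ 2 + r ^ 2) / t)) :=
        Real.exp_le_exp.2 (by linarith)
      have h6 : 0 ≤ Set.indicator (Ici T) (fun t : ℝ => M * t ^ (-(3 : ℝ) / 2)) t :=
        Set.indicator_nonneg (fun x hx => by
          have : (0:ℝ) < x := lt_of_lt_of_le hT hx
          positivity) t
      have h7 : (0:ℝ) < t ^ (-(((n : ℝ) + 1) / 2) - 1) := Real.rpow_pos_of_pos ht0 _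
      have h8 := mul_le_mul_of_nonneg_left (mul_le_mul_of_nonneg_right h5 h7.le) hc₃.le
      simp only [hgdef]
      linarith
    · have hKb := hbig t r htT hr hrD
      have e2 : (0:ℝ) ≤ t ^ (-(3 : ℝ) / 2) := (Real.rpow_pos_of_pos ht0 _).le
      have e1 : Real.exp (-(y ^ 2 / (4 * t))) ≤ 1 := by
        rw [Real.exp_le_one_iff]
        have : (0:ℝ) ≤ y ^ 2 / (4 * t) := by positivity
        linarith
      have h1 : Real.exp (-(y ^ 2 / (4 * t))) * K t r * t ^ (-(3 : ℝ) / 2)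
          ≤ M * t ^ (-(3 : ℝ) / 2) := by
        have : Real.exp (-(y ^ 2 / (4 * t))) * K t r ≤ M := by
          nlinarith [Real.exp_pos (-(y ^ 2 / (4 * t)))]
        exact mul_le_mul_of_nonneg_right this e2
      have h2 : Set.indicator (Ici T) (fun t : ℝ => M * t ^ (-(3 : ℝ) / 2)) t
          = M * t ^ (-(3 : ℝ) / 2) := Set.indicator_of_mem htT _
      have h3 : (0:ℝ) ≤ c₃ * (Real.exp (-(min (4 : ℝ)⁻¹ c₄⁻¹ * (y ^ 2 + r ^ 2) / t))
          * t ^ (-(((n : ℝ) + 1) / 2) - 1)) := by positivity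
      simp only [hgdef]
      linarith
  -- measurability of f on Ioi 0
  have hfm : AEStronglyMeasurable
      (fun t => Real.exp (-(y ^ 2 / (4 * t))) * K t r * t ^ (-(3 : ℝ) / 2))
      (volume.restrict (Ioi 0)) := by
    have m1 : Measurable fun t : ℝ => Real.exp (-(y ^ 2 / (4 * t))) :=
      ((measurable_const.div (measurable_const.mul measurable_id)).neg).exp
    have m2 : Measurable fun t : ℝ => K t r :=
      hK.comp (measurable_id.prodMk measurable_const)
    have m3 : AEStronglyMeasurable (fun t : ℝ => t ^ (-(3 : ℝ) / 2))
        (volume.restrict (Ioi 0)) := by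
      refine ContinuousOn.aestronglyMeasurable (fun x hx => ?_) measurableSet_Ioi
      exact (Real.continuousAt_rpow_const x _ (Or.inl (ne_of_gt hx))).continuousWithinAt
    exact ((m1.mul m2).aestronglyMeasurable.mul m3)
  have hfint : IntegrableOn
      (fun t => Real.exp (-(y ^ 2 / (4 * t))) * K t r * t ^ (-(3 : ℝ) / 2)) (Ioi 0) := by
    refine Integrable.mono' hgint hfm ?_
    filter_upwards [ae_restrict_mem measurableSet_Ioi] with t ht
    rw [Real.norm_eq_abs, abs_of_nonneg (hfnn t ht)]
    exact hdom t ht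
  refine ⟨hfint, ?_⟩
  have hle := setIntegral_mono_on hfint hgint measurableSet_Ioi hdom
  have hval : ∫ t in Ioi (0:ℝ), g t
      = c₃ * ((1 / (min (4 : ℝ)⁻¹ c₄⁻¹ * (y ^ 2 + r ^ 2))) ^ (((n : ℝ) + 1) / 2)
          * Real.Gamma (((n : ℝ) + 1) / 2)) + M * (2 * T ^ (-(1 : ℝ) / 2)) := by
    simp only [hgdef]
    rw [integral_add (hgi1.const_mul c₃) hind, integral_const_mul, hgv1,
      setIntegral_indicator measurableSet_Ici,
      show Ioi (0:ℝ) ∩ Ici T = Ici T from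
        inter_eq_self_of_subset_right (fun x (hx : x ∈ Ici T) => lt_of_lt_of_le hT hx),
      MeasureTheory.integral_Ici_eq_integral_Ioi, integral_const_mul,
      integral_Ioi_rpow_of_lt (by norm_num : (-(3:ℝ)/2) < -1) hT,
      show (-(3:ℝ)/2 + 1) = -(1:ℝ)/2 by norm_num]
    ring
  refine hle.trans ?_
  rw [hval]
  have e1 : (1 / (min (4 : ℝ)⁻¹ c₄⁻¹ * (y ^ 2 + r ^ 2))) ^ (((n : ℝ) + 1) / 2)
      = (min (4 : ℝ)⁻¹ c₄⁻¹) ^ (-(((n : ℝ) + 1) / 2))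
        * (y ^ 2 + r ^ 2) ^ (-(((n : ℝ) + 1) / 2)) := by
    rw [one_div, Real.inv_rpow hab.le, Real.mul_rpow ha.le hs.le, mul_inv,
      ← Real.rpow_neg ha.le, ← Real.rpow_neg hs.le]
  rw [e1]
  have key1 : 1 ≤ (1 + D ^ 2) ^ (((n : ℝ) + 1) / 2)
      * (y ^ 2 + r ^ 2) ^ (-(((n : ℝ) + 1) / 2)) := by
    have h9 : (y ^ 2 + r ^ 2) ^ (((n : ℝ) + 1) / 2) ≤ (1 + D ^ 2) ^ (((n : ℝ) + 1) / 2) :=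
      Real.rpow_le_rpow hs.le hsle hP.le
    rw [Real.rpow_neg hs.le, ← div_eq_mul_inv, le_div_iff₀ (Real.rpow_pos_of_pos hs _), one_mul]
    exact h9
  have hB : (0:ℝ) < 2 * M * T ^ (-(1 : ℝ) / 2) := by positivity
  have key2 := mul_le_mul_of_nonneg_left key1 hB.le
  have hA : (0:ℝ) ≤ c₃ * Real.Gamma (((n : ℝ) + 1) / 2)
      * (min (4 : ℝ)⁻¹ c₄⁻¹) ^ (-(((n : ℝ) + 1) / 2)) := by positivity
  nlinarith [key2]

set_option maxHeartbeats 2000000 in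
lemma key_lower (n : ℕ) {T D M c₁ c₂ c₃ c₄ : ℝ}
    (hT : 0 < T) (hD : 0 < D) (hM : 0 < M)
    (hc₁ : 0 < c₁) (hc₂ : 0 < c₂) (hc₃ : 0 < c₃) (hc₄ : 0 < c₄) :
    ∃ c : ℝ, 0 < c ∧
      ∀ K : ℝ → ℝ → ℝ, Measurable (Function.uncurry K) →
        (∀ t r, 0 < t → t < T → 0 < r → r ≤ D →
          c₁ * t ^ (-(n : ℝ) / 2) * Real.exp (-(r ^ 2 / (c₂ * t))) ≤ K t r) →
        (∀ t r, 0 < t → t < T → 0 < r → r ≤ D →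
          K t r ≤ c₃ * t ^ (-(n : ℝ) / 2) * Real.exp (-(r ^ 2 / (c₄ * t)))) →
        (∀ t r, T ≤ t → 0 < r → r ≤ D → 0 ≤ K t r ∧ K t r ≤ M) →
        ∀ y r : ℝ, 0 < y → y < 1 → 0 < r → r ≤ D →
          c * (y ^ 2 + r ^ 2) ^ (-(((n : ℝ) + 1) / 2))
            ≤ ∫ t in Ioi (0 : ℝ), Real.exp (-(y ^ 2 / (4 * t))) * K t r * t ^ (-(3 : ℝ) / 2) := by
  have hP : (0 : ℝ) < ((n : ℝ) + 1) / 2 := by positivity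
  obtain ⟨ε, hε, hεT⟩ : ∃ ε : ℝ, 0 < ε ∧ 2 * ε * (1 + D ^ 2) < T := by
    refine ⟨T / (4 * (1 + D ^ 2)), by positivity, ?_⟩
    have h1 : 2 * (T / (4 * (1 + D ^ 2))) * (1 + D ^ 2) = T / 2 := by
      field_simp; ring
    rw [h1]; linarith
  obtain ⟨C, hC, hCK⟩ := key_upper n hT hD hM hc₃ hc₄
  refine ⟨c₁ * Real.exp (-(1 / (4 * ε))) * Real.exp (-(1 / (c₂ * ε)))
      * (2 * ε) ^ (-(((n : ℝ) + 1) / 2) - 1) * ε, by positivity, ?_⟩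
  intro K hK hlow hupp hbig y r hy hy1 hr hrD
  have hnn : ∀ t r, 0 < t → 0 < r → r ≤ D → 0 ≤ K t r := by
    intro t r ht hr hrD
    rcases lt_or_ge t T with h | h
    · exact le_trans (by positivity) (hlow t r ht h hr hrD)
    · exact (hbig t r h hr hrD).1
  have hfint := (hCK K hK hupp hbig hnn y r hy hy1 hr hrD).1
  have hs : (0 : ℝ) < y ^ 2 + r ^ 2 := by positivity
  have hsle : y ^ 2 + r ^ 2 ≤ 1 + D ^ 2 := by nlinarith
  have hεs : (0 : ℝ) < ε * (y ^ 2 + r ^ 2) := by positivity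
  have h2εs : 2 * ε * (y ^ 2 + r ^ 2) < T := by
    calc 2 * ε * (y ^ 2 + r ^ 2) ≤ 2 * ε * (1 + D ^ 2) := by nlinarith
      _ < T := hεT
  -- lower bound for f on the interval
  have hbound : ∀ t ∈ Ioc (ε * (y ^ 2 + r ^ 2)) (2 * ε * (y ^ 2 + r ^ 2)),
      c₁ * Real.exp (-(1 / (4 * ε))) * Real.exp (-(1 / (c₂ * ε)))
        * (2 * ε * (y ^ 2 + r ^ 2)) ^ (-(((n : ℝ) + 1) / 2) - 1)
      ≤ Real.exp (-(y ^ 2 / (4 * t))) * K t r * t ^ (-(3 : ℝ) / 2) := by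
    rintro t ⟨ht1, ht2⟩
    have ht0 : (0 : ℝ) < t := lt_trans hεs ht1
    have htT : t < T := lt_of_le_of_lt ht2 h2εs
    have hy2 : y ^ 2 ≤ y ^ 2 + r ^ 2 := by nlinarith
    have hr2 : r ^ 2 ≤ y ^ 2 + r ^ 2 := by nlinarith
    -- exp bounds
    have e1 : Real.exp (-(1 / (4 * ε))) ≤ Real.exp (-(y ^ 2 / (4 * t))) := by
      apply Real.exp_le_exp.2
      rw [neg_le_neg_iff]
      calc y ^ 2 / (4 * t) ≤ (y ^ 2 + r ^ 2) / (4 * (ε * (y ^ 2 + r ^ 2))) := by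
            apply div_le_div₀ hs.le hy2 (by positivity)
            nlinarith
        _ = 1 / (4 * ε) := by field_simp
    have e2 : Real.exp (-(1 / (c₂ * ε))) ≤ Real.exp (-(r ^ 2 / (c₂ * t))) := by
      apply Real.exp_le_exp.2
      rw [neg_le_neg_iff]
      calc r ^ 2 / (c₂ * t) ≤ (y ^ 2 + r ^ 2) / (c₂ * (ε * (y ^ 2 + r ^ 2))) := by
            apply div_le_div₀ hs.le hr2 (by positivity)
            nlinarith
        _ = 1 / (c₂ * ε) := by field_simp
    have e3 : (2 * ε * (y ^ 2 + r ^ 2)) ^ (-(n : ℝ) / 2) ≤ t ^ (-(n : ℝ) / 2) :=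
      Real.rpow_le_rpow_of_nonpos ht0 ht2
        (by linarith [Nat.cast_nonneg (α := ℝ) n] : -(n : ℝ) / 2 ≤ 0)
    have e4 : (2 * ε * (y ^ 2 + r ^ 2)) ^ (-(3 : ℝ) / 2) ≤ t ^ (-(3 : ℝ) / 2) :=
      Real.rpow_le_rpow_of_nonpos ht0 ht2 (by norm_num)
    have hKlow := hlow t r ht0 htT hr hrD
    -- combine
    have step1 : c₁ * (2 * ε * (y ^ 2 + r ^ 2)) ^ (-(n : ℝ) / 2) * Real.exp (-(1 / (c₂ * ε)))
        ≤ K t r := by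
      refine le_trans ?_ hKlow
      have := mul_le_mul (mul_le_mul_of_nonneg_left e3 hc₁.le) e2 (Real.exp_pos _).le
        (by positivity)
      exact this
    have step2 : Real.exp (-(1 / (4 * ε)))
          * (c₁ * (2 * ε * (y ^ 2 + r ^ 2)) ^ (-(n : ℝ) / 2) * Real.exp (-(1 / (c₂ * ε))))
          * (2 * ε * (y ^ 2 + r ^ 2)) ^ (-(3 : ℝ) / 2)
        ≤ Real.exp (-(y ^ 2 / (4 * t))) * K t r * t ^ (-(3 : ℝ) / 2) := by
      have hKnn : 0 ≤ K t r := hnn t r ht0 hr hrD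
      refine mul_le_mul (mul_le_mul e1 step1 (by positivity) (Real.exp_pos _).le) e4
        (by positivity) (by positivity)
    refine le_trans (le_of_eq ?_) step2
    rw [show (-(((n:ℝ)+1)/2) - 1) = -(n:ℝ)/2 + -(3:ℝ)/2 by ring,
      Real.rpow_add (by positivity : (0:ℝ) < 2 * ε * (y ^ 2 + r ^ 2))]
    ring
  have hfae : 0 ≤ᵐ[volume.restrict (Ioi (0:ℝ))]
      fun t => Real.exp (-(y ^ 2 / (4 * t))) * K t r * t ^ (-(3 : ℝ) / 2) := by
    filter_upwards [ae_restrict_mem measurableSet_Ioi] with t ht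
    have ht0 : (0:ℝ) < t := ht
    have := hnn t r ht0 hr hrD
    positivity
  have hsub : Ioc (ε * (y ^ 2 + r ^ 2)) (2 * ε * (y ^ 2 + r ^ 2)) ⊆ Ioi (0:ℝ) :=
    fun x hx => lt_trans hεs hx.1
  have hmono := setIntegral_mono_set hfint hfae hsub.eventuallyLE
  have hconst := setIntegral_ge_of_const_le measurableSet_Ioc measure_Ioc_lt_top.ne hbound
    (hfint.mono hsub le_rfl)
  have hvol : (volume (Ioc (ε * (y ^ 2 + r ^ 2)) (2 * ε * (y ^ 2 + r ^ 2)))).toReal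
      = ε * (y ^ 2 + r ^ 2) := by
    rw [Real.volume_Ioc, ENNReal.toReal_ofReal (by nlinarith)]
    ring
  rw [measureReal_def, hvol, smul_eq_mul, mul_comm (ε * (y ^ 2 + r ^ 2))] at hconst
  have hss : (y ^ 2 + r ^ 2) ^ (-(((n:ℝ)+1)/2))
      = (y ^ 2 + r ^ 2) ^ (-(((n:ℝ)+1)/2) - 1) * (y ^ 2 + r ^ 2) := by
    have h := Real.rpow_add hs (-(((n:ℝ)+1)/2) - 1) 1
    rw [Real.rpow_one] at h
    rw [← h]
    congr 1
    ring
  have hmul : (2 * ε * (y ^ 2 + r ^ 2)) ^ (-(((n:ℝ)+1)/2) - 1)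
      = (2 * ε) ^ (-(((n:ℝ)+1)/2) - 1) * (y ^ 2 + r ^ 2) ^ (-(((n:ℝ)+1)/2) - 1) :=
    Real.mul_rpow (by positivity) hs.le
  calc c₁ * Real.exp (-(1 / (4 * ε))) * Real.exp (-(1 / (c₂ * ε)))
        * (2 * ε) ^ (-(((n : ℝ) + 1) / 2) - 1) * ε * (y ^ 2 + r ^ 2) ^ (-(((n : ℝ) + 1) / 2))
      = c₁ * Real.exp (-(1 / (4 * ε))) * Real.exp (-(1 / (c₂ * ε)))
          * (2 * ε * (y ^ 2 + r ^ 2)) ^ (-(((n : ℝ) + 1) / 2) - 1)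
          * (ε * (y ^ 2 + r ^ 2)) := by rw [hss, hmul]; ring
    _ ≤ ∫ t in Ioc (ε * (y ^ 2 + r ^ 2)) (2 * ε * (y ^ 2 + r ^ 2)),
          Real.exp (-(y ^ 2 / (4 * t))) * K t r * t ^ (-(3 : ℝ) / 2) := hconst
    _ ≤ ∫ t in Ioi (0:ℝ),
          Real.exp (-(y ^ 2 / (4 * t))) * K t r * t ^ (-(3 : ℝ) / 2) := hmono

/-- Two-sided comparability for the subordinated (Poisson-type) kernel built from a kernel `K`
satisfying two-sided Gaussian bounds for small times and a uniform bound for large times: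
`P(y,r) = (y/(2√π)) ∫₀^∞ e^{-y²/(4t)} K(t,r) t^{-3/2} dt` is comparable to
`y/(y²+r²)^{(n+1)/2}` for `0 < y < 1` and `0 < r ≤ D`, with constants depending only on
`n, T, D, M, c₁, c₂, c₃, c₄`. -/
theorem subordinated_kernel_comparable (n : ℕ) (hn : 1 ≤ n)
    (T D M c₁ c₂ c₃ c₄ : ℝ)
    (hT : 0 < T) (hD : 0 < D) (hM : 0 < M)
    (hc₁ : 0 < c₁) (hc₂ : 0 < c₂) (hc₃ : 0 < c₃) (hc₄ : 0 < c₄) :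
    ∃ c C : ℝ, 0 < c ∧ c ≤ C ∧
      ∀ K : ℝ → ℝ → ℝ,
        Measurable (Function.uncurry K) →
        (∀ t r, 0 < t → t < T → 0 < r → r ≤ D →
          c₁ * t ^ (-(n : ℝ) / 2) * Real.exp (-(r ^ 2 / (c₂ * t))) ≤ K t r) →
        (∀ t r, 0 < t → t < T → 0 < r → r ≤ D →
          K t r ≤ c₃ * t ^ (-(n : ℝ) / 2) * Real.exp (-(r ^ 2 / (c₄ * t)))) →
        (∀ t r, T ≤ t → 0 < r → r ≤ D → 0 ≤ K t r ∧ K t r ≤ M) →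
        ∀ y r : ℝ, 0 < y → y < 1 → 0 < r → r ≤ D →
          c * y / (y ^ 2 + r ^ 2) ^ (((n : ℝ) + 1) / 2) ≤
            (y / (2 * Real.sqrt Real.pi)) *
              ∫ t in Set.Ioi (0 : ℝ),
                Real.exp (-(y ^ 2 / (4 * t))) * K t r * t ^ (-(3 : ℝ) / 2) ∧
          (y / (2 * Real.sqrt Real.pi)) *
              ∫ t in Set.Ioi (0 : ℝ),
                Real.exp (-(y ^ 2 / (4 * t))) * K t r * t ^ (-(3 : ℝ) / 2) ≤
            C * y / (y ^ 2 + r ^ 2) ^ (((n : ℝ) + 1) / 2) := by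
  obtain ⟨C, hC, hCK⟩ := key_upper n hT hD hM hc₃ hc₄
  obtain ⟨c, hc, hcK⟩ := key_lower n hT hD hM hc₁ hc₂ hc₃ hc₄
  have hπ : 0 < Real.sqrt Real.pi := Real.sqrt_pos.2 Real.pi_pos
  refine ⟨min (c / (2 * Real.sqrt Real.pi)) (C / (2 * Real.sqrt Real.pi)),
    C / (2 * Real.sqrt Real.pi), lt_min (by positivity) (by positivity),
    min_le_right _ _, ?_⟩
  intro K hK hlow hupp hbig y r hy hy1 hr hrD
  have hnn : ∀ t r, 0 < t → 0 < r → r ≤ D → 0 ≤ K t r := by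
    intro t r ht hr hrD
    rcases lt_or_ge t T with h | h
    · exact le_trans (by positivity) (hlow t r ht h hr hrD)
    · exact (hbig t r h hr hrD).1
  have hs : (0:ℝ) < y ^ 2 + r ^ 2 := by positivity
  have hspow : (0:ℝ) < (y ^ 2 + r ^ 2) ^ (((n : ℝ) + 1) / 2) := Real.rpow_pos_of_pos hs _
  have hneg : (y ^ 2 + r ^ 2) ^ (-(((n : ℝ) + 1) / 2))
      = ((y ^ 2 + r ^ 2) ^ (((n : ℝ) + 1) / 2))⁻¹ := Real.rpow_neg hs.le _
  have hupint := (hCK K hK hupp hbig hnn y r hy hy1 hr hrD).2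
  have hloint := hcK K hK hlow hupp hbig y r hy hy1 hr hrD
  constructor
  · have h1 := mul_le_mul_of_nonneg_left hloint
      (by positivity : (0:ℝ) ≤ y / (2 * Real.sqrt Real.pi))
    refine le_trans ?_ h1
    rw [hneg, div_eq_mul_inv]
    calc min (c / (2 * Real.sqrt Real.pi)) (C / (2 * Real.sqrt Real.pi)) * y
          * ((y ^ 2 + r ^ 2) ^ (((n : ℝ) + 1) / 2))⁻¹
        ≤ c / (2 * Real.sqrt Real.pi) * y * ((y ^ 2 + r ^ 2) ^ (((n : ℝ) + 1) / 2))⁻¹ := by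
          have hmin := min_le_left (c / (2 * Real.sqrt Real.pi)) (C / (2 * Real.sqrt Real.pi))
          exact mul_le_mul_of_nonneg_right (mul_le_mul_of_nonneg_right hmin hy.le)
            (inv_nonneg.2 hspow.le)
      _ = y / (2 * Real.sqrt Real.pi)
            * (c * ((y ^ 2 + r ^ 2) ^ (((n : ℝ) + 1) / 2))⁻¹) := by ring
  · have h1 := mul_le_mul_of_nonneg_left hupint
      (by positivity : (0:ℝ) ≤ y / (2 * Real.sqrt Real.pi))
    refine h1.trans (le_of_eq ?_)
    rw [hneg]
    ring
end

section
/- Let p > 0, θ > 1, K > 0, and let (α_j)_{j≥1} be a sequence of positive real numbers satisfying α_{j+1} ≤ (K r_j)^θ · α_j^θ for all j ≥ 1, where r_j = p θ^{j−1}. Then limsup_{j→∞} (log α_j)/r_j ≤ (1/p) [ log α₁ + (θ/(θ−1)) log(Kp) + (θ/(θ−1)²) log θ ]. -/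
open Real Filter

/-- Abstract iteration lemma: if `α_{j+1} ≤ (K r_j)^θ α_j^θ` with `r_j = p θ^{j−1}`, then
`limsup_j (log α_j)/r_j ≤ (1/p)[log α₁ + (θ/(θ−1)) log(Kp) + (θ/(θ−1)²) log θ]`
(the limsup being taken in the extended reals). -/
theorem iteration_limsup_bound (p θ K : ℝ) (hp : 0 < p) (hθ : 1 < θ) (hK : 0 < K)
    (α : ℕ → ℝ) (hα : ∀ j : ℕ, 1 ≤ j → 0 < α j)
    (hrec : ∀ j : ℕ, 1 ≤ j → α (j + 1) ≤ (K * (p * θ ^ (j - 1))) ^ θ * (α j) ^ θ) :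
    Filter.limsup (fun j : ℕ => ((Real.log (α j) / (p * θ ^ (j - 1)) : ℝ) : EReal)) atTop ≤
      (((1 / p) * (Real.log (α 1) + (θ / (θ - 1)) * Real.log (K * p)
        + (θ / (θ - 1) ^ 2) * Real.log θ) : ℝ) : EReal) := by
  have hθ0 : (0:ℝ) < θ := lt_trans one_pos hθ
  have hθ1 : (0:ℝ) < θ - 1 := sub_pos.2 hθ
  have hp' : p ≠ 0 := hp.ne'
  have hθ' : θ ≠ 0 := hθ0.ne'
  have hθ1' : θ - 1 ≠ 0 := hθ1.ne'
  set x : ℝ := θ⁻¹ with hxdef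
  have hx0 : 0 ≤ x := by positivity
  have hx1 : x < 1 := inv_lt_one_of_one_lt₀ hθ
  have hx1' : (1:ℝ) - x ≠ 0 := by
    have : x < 1 := hx1
    intro h; nlinarith
  set b : ℕ → ℝ := fun j => Real.log (α j) / (p * θ ^ (j - 1)) with hbdef
  set t : ℕ → ℝ := fun i => (Real.log (K * p) + i * Real.log θ) / (p * θ ^ i) with htdef
  -- key recursive step
  have key : ∀ k : ℕ, b (k + 2) ≤ t k + b (k + 1) := by
    intro k
    have hjk : 1 ≤ k + 1 := Nat.le_add_left 1 k
    have hrk : (0:ℝ) < p * θ ^ k := by positivity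
    have hKr : (0:ℝ) < K * (p * θ ^ k) := by positivity
    have hαk : 0 < α (k + 1) := hα _ hjk
    have hαk2 : 0 < α (k + 2) := hα _ (by omega)
    have h := hrec (k + 1) hjk
    simp only [Nat.add_sub_cancel] at h
    have hlog : Real.log (α (k + 2)) ≤ θ * Real.log (K * (p * θ ^ k)) + θ * Real.log (α (k + 1)) := by
      calc Real.log (α (k + 2)) ≤ Real.log ((K * (p * θ ^ k)) ^ θ * (α (k + 1)) ^ θ) :=
            Real.log_le_log hαk2 h
        _ = θ * Real.log (K * (p * θ ^ k)) + θ * Real.log (α (k + 1)) := by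
            rw [Real.log_mul (by positivity) (by positivity),
              Real.log_rpow hKr, Real.log_rpow hαk]
    have hb2 : b (k + 2) = Real.log (α (k + 2)) / (p * θ ^ (k + 1)) := by
      simp [hbdef]
    have hb1 : b (k + 1) = Real.log (α (k + 1)) / (p * θ ^ k) := by
      simp [hbdef]
    rw [hb2, hb1, htdef]
    have hlogKr : Real.log (K * (p * θ ^ k)) = Real.log (K * p) + k * Real.log θ := by
      rw [show K * (p * θ ^ k) = (K * p) * θ ^ k by ring,
        Real.log_mul (by positivity) (by positivity), Real.log_pow]
    calc Real.log (α (k + 2)) / (p * θ ^ (k + 1))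
        ≤ (θ * Real.log (K * (p * θ ^ k)) + θ * Real.log (α (k + 1))) / (p * θ ^ (k + 1)) := by
          gcongr
      _ = (Real.log (K * p) + k * Real.log θ) / (p * θ ^ k) + Real.log (α (k + 1)) / (p * θ ^ k) := by
          rw [hlogKr]
          field_simp
          ring
  -- partial sums
  set c : ℕ → ℝ := fun j => b 1 + ∑ i ∈ Finset.range j, t i with hcdef
  have hbc : ∀ j : ℕ, b (j + 1) ≤ c j := by
    intro j
    induction j with
    | zero => simp [hcdef]
    | succ k ih =>
        have := key k
        have : b (k + 2) ≤ t k + c k := le_trans this (by linarith)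
        calc b (k + 1 + 1) ≤ t k + c k := this
          _ = c (k + 1) := by
              have : c (k + 1) = c k + t k := by
                simp [hcdef, Finset.sum_range_succ, add_assoc]
              rw [this]; ring
  -- limit of partial sums
  have h1 : HasSum (fun i : ℕ => x ^ i) (1 - x)⁻¹ := hasSum_geometric_of_lt_one hx0 hx1
  have h2 : HasSum (fun i : ℕ => (i : ℝ) * x ^ i) (x / (1 - x) ^ 2) :=
    hasSum_coe_mul_geometric_of_norm_lt_one (by rwa [Real.norm_eq_abs, abs_of_nonneg hx0])
  have hts : HasSum t ((Real.log (K * p) * (1 - x)⁻¹ + Real.log θ * (x / (1 - x) ^ 2)) / p) := by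
    have h3 := ((h1.mul_left (Real.log (K * p))).add (h2.mul_left (Real.log θ))).div_const p
    have heq : t = fun i : ℕ =>
        (Real.log (K * p) * x ^ i + Real.log θ * ((i : ℝ) * x ^ i)) / p := by
      funext i
      have hθi : (θ:ℝ) ^ i ≠ 0 := by positivity
      have hxi : x ^ i = (θ ^ i)⁻¹ := by rw [hxdef, inv_pow]
      rw [htdef]
      simp only [hxi]
      field_simp
    rw [heq]
    exact h3
  set S := (Real.log (K * p) * (1 - x)⁻¹ + Real.log θ * (x / (1 - x) ^ 2)) / p with hSdef
  set L : ℝ := (1 / p) * (Real.log (α 1) + (θ / (θ - 1)) * Real.log (K * p)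
      + (θ / (θ - 1) ^ 2) * Real.log θ) with hLdef
  have hbL : b 1 + S = L := by
    have hb1 : b 1 = Real.log (α 1) / p := by simp [hbdef]
    have hx' : 1 - x = (θ - 1) / θ := by
      rw [hxdef]; field_simp
    rw [hb1, hSdef, hLdef, hx', hxdef]
    field_simp
    ring
  have hc : Tendsto c atTop (nhds L) := by
    rw [← hbL]
    exact (tendsto_const_nhds.add hts.tendsto_sum_nat)
  -- conclude
  have hev : ∀ᶠ j : ℕ in atTop,
      ((Real.log (α j) / (p * θ ^ (j - 1)) : ℝ) : EReal) ≤ ((c (j - 1) : ℝ) : EReal) := by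
    filter_upwards [eventually_ge_atTop 1] with j hj
    have : b j ≤ c (j - 1) := by
      obtain ⟨k, rfl⟩ := Nat.exists_eq_add_of_le hj
      simpa [Nat.add_comm] using hbc k
    exact_mod_cast this
  calc Filter.limsup (fun j : ℕ => ((Real.log (α j) / (p * θ ^ (j - 1)) : ℝ) : EReal)) atTop
      ≤ Filter.limsup (fun j : ℕ => ((c (j - 1) : ℝ) : EReal)) atTop :=
        Filter.limsup_le_limsup hev
    _ = (L : EReal) := by
        apply Tendsto.limsup_eq
        exact (EReal.tendsto_coe.2 (hc.comp (tendsto_sub_atTop_nat 1)))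
end

section
/- Let (Ω, μ) be a measure space with μ(Ω) < ∞, let u : Ω → [0,∞) be measurable, and let ν > 2, p > 1, C > 0. Suppose that for every real s ≥ p/2 one has (∫_Ω u^{sν} dμ)^{2/ν} ≤ C s ∫_Ω u^{2s} dμ, where the inequality is understood in [0,∞]. Then, provided ∫_Ω u^p dμ < ∞, u is essentially bounded and ess sup u ≤ K (∫_Ω u^p dμ)^{1/p}, where K is a constant depending only on C, p and ν. -/
open MeasureTheory Real Set ENNReal

lemma moser_prod_bound (χ p C : ℝ) (hχ : 1 < χ) (hp : 0 < p) (hC : 0 < C) :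
    ∃ K : ℝ, 1 ≤ K ∧ ∀ k : ℕ,
      (∏ j ∈ Finset.range k, (C * (p * χ ^ j / 2)) ^ (1 / (p * χ ^ j))) ≤ K := by
  have hχ0 : 0 < χ := by linarith
  set a : ℝ := |Real.log (C * p / 2)| with ha
  set b : ℝ := Real.log χ with hb
  have hb0 : 0 ≤ b := Real.log_nonneg hχ.le
  set d : ℕ → ℝ := fun j => (a + j * b) / (p * χ ^ j) with hd
  have hd0 : ∀ j, 0 ≤ d j := fun j => by
    apply div_nonneg
    · positivity
    · positivity
  have hsum : Summable d := by
    have hr1 : (1/χ : ℝ) < 1 := by rw [div_lt_one hχ0]; exact hχ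
    have hr0 : (0:ℝ) ≤ 1/χ := by positivity
    have hr : ‖(1/χ : ℝ)‖ < 1 := by rwa [Real.norm_eq_abs, abs_of_nonneg hr0]
    have h1 : Summable (fun j : ℕ => a * (1/χ)^j) :=
      (summable_geometric_of_lt_one hr0 hr1).mul_left a
    have h2 : Summable (fun j : ℕ => b * ((j:ℝ)^1 * (1/χ)^j)) :=
      (summable_pow_mul_geometric_of_norm_lt_one 1 hr).mul_left b
    apply ((h1.add h2).div_const p).congr
    intro j
    have hχj : (χ:ℝ)^j ≠ 0 := by positivity
    rw [hd]
    field_simp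
    rw [mul_comm, ← mul_assoc, ← mul_pow, mul_one_div_cancel hχ0.ne', one_pow, one_mul]
  set S : ℝ := ∑' j, d j with hS
  have hS0 : 0 ≤ S := tsum_nonneg hd0
  refine ⟨Real.exp S, Real.one_le_exp hS0, fun k => ?_⟩
  have hqpos : ∀ j : ℕ, 0 < p * χ ^ j := fun j => by positivity
  have hcpos : ∀ j : ℕ, 0 < C * (p * χ ^ j / 2) := fun j => by positivity
  have htpos : ∀ j : ℕ, 0 < (C * (p * χ ^ j / 2)) ^ (1 / (p * χ ^ j)) :=
    fun j => Real.rpow_pos_of_pos (hcpos j) _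
  have hprodpos : 0 < ∏ j ∈ Finset.range k, (C * (p * χ ^ j / 2)) ^ (1 / (p * χ ^ j)) :=
    Finset.prod_pos fun j _ => htpos j
  rw [← Real.exp_log hprodpos]
  apply Real.exp_le_exp.2
  rw [Real.log_prod (fun j _ => (htpos j).ne')]
  calc ∑ j ∈ Finset.range k, Real.log ((C * (p * χ ^ j / 2)) ^ (1 / (p * χ ^ j)))
      ≤ ∑ j ∈ Finset.range k, d j := by
        apply Finset.sum_le_sum
        intro j _
        rw [Real.log_rpow (hcpos j)]
        have : Real.log (C * (p * χ ^ j / 2)) = Real.log (C * p / 2) + j * b := by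
          have : C * (p * χ ^ j / 2) = (C * p / 2) * χ ^ j := by ring
          rw [this, Real.log_mul (by positivity) (by positivity), Real.log_pow, hb]
        rw [this]
        have hle : Real.log (C * p / 2) + j * b ≤ a + j * b := by
          have := le_abs_self (Real.log (C * p / 2)); rw [ha]; linarith
        calc 1 / (p * χ ^ j) * (Real.log (C * p / 2) + j * b)
            ≤ 1 / (p * χ ^ j) * (a + j * b) :=
              mul_le_mul_of_nonneg_left hle (by positivity)
          _ = d j := by simp only [hd]; ring
    _ ≤ S := Summable.sum_le_tsum _ (fun j _ => hd0 j) hsum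

/-- Abstract Moser-iteration lemma: on a finite measure space, if a nonnegative measurable `u`
satisfies `(∫ u^{sν})^{2/ν} ≤ C s ∫ u^{2s}` (in `[0,∞]`) for every `s ≥ p/2`, and
`∫ u^p < ∞`, then `u` is essentially bounded with
`ess sup u ≤ K (∫ u^p)^{1/p}`, where `K` depends only on `C`, `p` and `ν`. -/
theorem abstract_moser_iteration (ν p C : ℝ) (hν : 2 < ν) (hp : 1 < p) (hC : 0 < C) :
    ∃ K : ℝ, 0 < K ∧
      ∀ (X : Type) (_ : MeasurableSpace X) (μ : Measure X), IsFiniteMeasure μ →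
        ∀ u : X → ℝ, Measurable u → (∀ x, 0 ≤ u x) →
        (∀ s : ℝ, p / 2 ≤ s →
          (∫⁻ x, ENNReal.ofReal (u x ^ (s * ν)) ∂μ) ^ (2 / ν) ≤
            ENNReal.ofReal (C * s) * ∫⁻ x, ENNReal.ofReal (u x ^ (2 * s)) ∂μ) →
        (∫⁻ x, ENNReal.ofReal (u x ^ p) ∂μ) ≠ ⊤ →
        essSup (fun x => ENNReal.ofReal (u x)) μ ≤
          ENNReal.ofReal K * (∫⁻ x, ENNReal.ofReal (u x ^ p) ∂μ) ^ (1 / p) := by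
  have hp0 : 0 < p := by linarith
  have hν0 : 0 < ν := by linarith
  set χ : ℝ := ν / 2 with hχdef
  have hχ : 1 < χ := by rw [hχdef]; linarith
  have hχ0 : 0 < χ := by linarith
  obtain ⟨K, hK1, hKbd⟩ := moser_prod_bound χ p C hχ hp0 hC
  refine ⟨K, by linarith, ?_⟩
  intro X mX μ hfm u hu hnn hyp hfin
  have hq0 : ∀ k : ℕ, 0 < p * χ ^ k := fun k => by positivity
  set A : ℕ → ℝ≥0∞ := fun k => ∫⁻ x, ENNReal.ofReal (u x ^ (p * χ ^ k)) ∂μ with hA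
  set B : ℕ → ℝ≥0∞ := fun k => A k ^ (1 / (p * χ ^ k)) with hB
  -- iteration step
  have step : ∀ k : ℕ, B (k + 1) ≤
      ENNReal.ofReal ((C * (p * χ ^ k / 2)) ^ (1 / (p * χ ^ k))) * B k := by
    intro k
    have hs : p / 2 ≤ p * χ ^ k / 2 := by
      have h1 : (1:ℝ) ≤ χ ^ k := one_le_pow₀ hχ.le
      nlinarith
    have H0 := hyp (p * χ ^ k / 2) hs
    have e1 : p * χ ^ k / 2 * ν = p * χ ^ (k + 1) := by
      rw [pow_succ, hχdef]; ring
    have e2 : 2 * (p * χ ^ k / 2) = p * χ ^ k := by ring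
    simp only [e1, e2] at H0
    have H : (A (k + 1)) ^ (2 / ν) ≤
        ENNReal.ofReal (C * (p * χ ^ k / 2)) * A k := H0
    have hAk1 : A (k + 1) = ((A (k + 1)) ^ (2 / ν)) ^ χ := by
      rw [← ENNReal.rpow_mul]
      have : 2 / ν * χ = 1 := by rw [hχdef]; field_simp
      rw [this, ENNReal.rpow_one]
    have H2 : A (k + 1) ≤ (ENNReal.ofReal (C * (p * χ ^ k / 2)) * A k) ^ χ := by
      rw [hAk1]; exact ENNReal.rpow_le_rpow H hχ0.le
    have H3 : B (k + 1) ≤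
        ((ENNReal.ofReal (C * (p * χ ^ k / 2)) * A k) ^ χ) ^ (1 / (p * χ ^ (k + 1))) :=
      ENNReal.rpow_le_rpow H2 (by positivity)
    have e3 : χ * (1 / (p * χ ^ (k + 1))) = 1 / (p * χ ^ k) := by
      rw [pow_succ]; field_simp
    calc B (k + 1) ≤ ((ENNReal.ofReal (C * (p * χ ^ k / 2)) * A k) ^ χ) ^ (1 / (p * χ ^ (k + 1))) := H3
      _ = (ENNReal.ofReal (C * (p * χ ^ k / 2)) * A k) ^ (1 / (p * χ ^ k)) := by
          rw [← ENNReal.rpow_mul, e3]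
      _ = ENNReal.ofReal (C * (p * χ ^ k / 2)) ^ (1 / (p * χ ^ k)) * A k ^ (1 / (p * χ ^ k)) :=
          ENNReal.mul_rpow_of_nonneg _ _ (by positivity)
      _ = ENNReal.ofReal ((C * (p * χ ^ k / 2)) ^ (1 / (p * χ ^ k))) * B k := by
          rw [ENNReal.ofReal_rpow_of_nonneg (by positivity) (by positivity)]
  -- iterate
  have hprod_nonneg : ∀ k : ℕ,
      0 ≤ ∏ j ∈ Finset.range k, (C * (p * χ ^ j / 2)) ^ (1 / (p * χ ^ j)) := fun k =>
    Finset.prod_nonneg fun j _ => Real.rpow_nonneg (by positivity) _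
  have iter : ∀ k : ℕ, B k ≤
      ENNReal.ofReal (∏ j ∈ Finset.range k, (C * (p * χ ^ j / 2)) ^ (1 / (p * χ ^ j))) * B 0 := by
    intro k
    induction k with
    | zero => simp
    | succ k ih =>
        calc B (k + 1) ≤ ENNReal.ofReal ((C * (p * χ ^ k / 2)) ^ (1 / (p * χ ^ k))) * B k :=
              step k
          _ ≤ ENNReal.ofReal ((C * (p * χ ^ k / 2)) ^ (1 / (p * χ ^ k))) *
              (ENNReal.ofReal (∏ j ∈ Finset.range k, (C * (p * χ ^ j / 2)) ^ (1 / (p * χ ^ j))) * B 0) :=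
              mul_le_mul_right ih _
          _ = ENNReal.ofReal (∏ j ∈ Finset.range (k + 1), (C * (p * χ ^ j / 2)) ^ (1 / (p * χ ^ j))) * B 0 := by
              rw [Finset.prod_range_succ, ENNReal.ofReal_mul (hprod_nonneg k), mul_comm
                (ENNReal.ofReal _) (ENNReal.ofReal _)]
              ring
  have hBk : ∀ k : ℕ, B k ≤ ENNReal.ofReal K * B 0 := fun k =>
    (iter k).trans (mul_le_mul_left (ENNReal.ofReal_le_ofReal (hKbd k)) _)
  -- identify B 0 with the RHS
  have hB0 : B 0 = (∫⁻ x, ENNReal.ofReal (u x ^ p) ∂μ) ^ (1 / p) := by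
    simp [hB, hA]
  set g : X → ℝ≥0∞ := fun x => ENNReal.ofReal (u x) with hg
  have hgm : Measurable g := ENNReal.measurable_ofReal.comp hu
  set L : ℝ≥0∞ := ENNReal.ofReal K * B 0 with hL
  suffices h : essSup g μ ≤ L by
    rw [hL, hB0] at h; exact h
  -- Chebyshev argument
  have key : ∀ t : ℝ≥0∞, t ≠ 0 → t ≠ ⊤ → L < t → μ {x | t ≤ g x} = 0 := by
    intro t ht0 htop hLt
    have hLttop : L ≠ ⊤ := ne_top_of_lt hLt
    have hdiv : L / t < 1 := by
      rw [ENNReal.div_lt_iff (Or.inl ht0) (Or.inl htop), one_mul]; exact hLt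
    set r : ℝ := (L / t).toReal with hr
    have hdivtop : L / t ≠ ⊤ := hdiv.ne_top
    have hr0 : 0 ≤ r := ENNReal.toReal_nonneg
    have hr1 : r < 1 := by
      rw [hr]
      have h1 := (ENNReal.toReal_lt_toReal hdivtop ENNReal.one_ne_top).2 hdiv
      rwa [ENNReal.toReal_one] at h1
    have hLr : L / t = ENNReal.ofReal r := by
      rw [hr, ENNReal.ofReal_toReal hdivtop]
    have cheb : ∀ k : ℕ, μ {x | t ≤ g x} ≤ ENNReal.ofReal (r ^ (p * χ ^ k)) := by
      intro k
      set e : ℝ := p * χ ^ k with he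
      have he0 : 0 < e := hq0 k
      have hfmeas : Measurable fun x => g x ^ e := hgm.pow measurable_const
      have hAeq : ∫⁻ x, g x ^ e ∂μ = A k := by
        apply lintegral_congr
        intro x
        rw [hg]
        exact (ENNReal.ofReal_rpow_of_nonneg (hnn x) he0.le)
      have hset : {x | t ^ e ≤ g x ^ e} = {x | t ≤ g x} := by
        ext x; exact ENNReal.rpow_le_rpow_iff he0
      have hcb := mul_meas_ge_le_lintegral₀ (μ := μ) hfmeas.aemeasurable (t ^ e)
      rw [hset, hAeq] at hcb
      have hte0 : t ^ e ≠ 0 := (ENNReal.rpow_pos (ht0.bot_lt) htop).ne'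
      have htetop : t ^ e ≠ ⊤ := ENNReal.rpow_ne_top_of_nonneg he0.le htop
      have hmu : μ {x | t ≤ g x} ≤ A k / t ^ e := by
        rw [ENNReal.le_div_iff_mul_le (Or.inl hte0) (Or.inl htetop)]
        rwa [mul_comm]
      have hAB : A k = (B k) ^ e := by
        rw [hB, ← ENNReal.rpow_mul, one_div, inv_mul_cancel₀ he0.ne', ENNReal.rpow_one]
      calc μ {x | t ≤ g x} ≤ A k / t ^ e := hmu
        _ = (B k) ^ e / t ^ e := by rw [hAB]
        _ ≤ L ^ e / t ^ e := by
            apply ENNReal.div_le_div_right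
            exact ENNReal.rpow_le_rpow (hBk k) he0.le
        _ = (L / t) ^ e := (ENNReal.div_rpow_of_nonneg _ _ he0.le).symm
        _ = ENNReal.ofReal (r ^ e) := by
            rw [hLr, ENNReal.ofReal_rpow_of_nonneg hr0 he0.le]
    have tend : Filter.Tendsto (fun k : ℕ => ENNReal.ofReal (r ^ (p * χ ^ k))) Filter.atTop (nhds 0) := by
      have h1 : Filter.Tendsto (fun k : ℕ => (χ : ℝ) ^ k) Filter.atTop Filter.atTop :=
        tendsto_pow_atTop_atTop_of_one_lt hχ
      have h2 : Filter.Tendsto (fun k : ℕ => p * χ ^ k) Filter.atTop Filter.atTop :=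
        h1.const_mul_atTop hp0
      have h3 : Filter.Tendsto (fun x : ℝ => r ^ x) Filter.atTop (nhds 0) :=
        tendsto_rpow_atTop_of_base_lt_one r (by linarith) hr1
      have h4 := h3.comp h2
      have h5 := ENNReal.tendsto_ofReal h4
      simpa using h5
    have := ge_of_tendsto' tend cheb
    exact le_antisymm this zero_le
  rcases eq_top_or_lt_top L with hLtop | hLlt
  · rw [hLtop]; exact le_top
  -- a.e. bound
  have hae : ∀ᵐ x ∂μ, g x ≤ L := by
    rw [ae_iff]
    have hsub : {x | ¬ g x ≤ L} ⊆
        ⋃ qq : ℚ, {x | L < ((Real.toNNReal (qq : ℝ)) : ℝ≥0∞)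
          ∧ ((Real.toNNReal (qq : ℝ)) : ℝ≥0∞) ≤ g x} := by
      intro x hx
      simp only [mem_setOf_eq, not_le] at hx
      obtain ⟨qq, _, h1, h2⟩ := ENNReal.lt_iff_exists_rat_btwn.1 hx
      exact mem_iUnion.2 ⟨qq, h1, h2.le⟩
    refine measure_mono_null hsub (measure_iUnion_null fun qq => ?_)
    by_cases hc : L < ((Real.toNNReal (qq : ℝ)) : ℝ≥0∞)
    · have hc0 : ((Real.toNNReal (qq : ℝ)) : ℝ≥0∞) ≠ 0 := by
        intro h; rw [h] at hc; exact absurd hc (by simp)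
      have hnull := key _ hc0 ENNReal.coe_ne_top hc
      have hseteq : {x | L < ((Real.toNNReal (qq : ℝ)) : ℝ≥0∞)
          ∧ ((Real.toNNReal (qq : ℝ)) : ℝ≥0∞) ≤ g x}
          = {x | ((Real.toNNReal (qq : ℝ)) : ℝ≥0∞) ≤ g x} := by
        ext x; simp [hc]
      rw [hseteq]; exact hnull
    · have hseteq : {x | L < ((Real.toNNReal (qq : ℝ)) : ℝ≥0∞)
          ∧ ((Real.toNNReal (qq : ℝ)) : ℝ≥0∞) ≤ g x} = ∅ := by
        ext x; simp [hc]
      rw [hseteq]; exact measure_empty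
  exact essSup_le_of_ae_le L hae
end
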